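/- arXiv:2603.27081 — 2 statements merged into one kernel-verified Lean document; each statement's English description precedes it below -/
import Mathlib

section
/- Let n ≥ 2 and let h : ℝ^n → ℝ be continuous and convex on Δ_n, twice continuously differentiable on an open set U ⊆ ℝ^n containing Δ_n°, with Hessian ∇²h(x) positive definite for every x ∈ Δ_n°. Let M := {P_H ∇h(x) : x ∈ Δ_n°}. Then: (i) the map x ↦ P_H ∇h(x) is a bijection from Δ_n° onto M; and (ii) for every z ∈ M, the function x ↦ ⟨x, z⟩ − h(x) has a unique maximizer over Δ_n, this maximizer lies in Δ_n°, and it is exactly the unique x ∈ Δ_n° with P_H ∇h(x) = z. -/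
open Matrix MeasureTheory

noncomputable section

/-- The standard probability simplex in `ℝ^n`. -/
def simplex (n : ℕ) : Set (Fin n → ℝ) := {x | (∀ i, 0 ≤ x i) ∧ ∑ i, x i = 1}

/-- The relative interior of the standard probability simplex. -/
def simplexInt (n : ℕ) : Set (Fin n → ℝ) := {x | (∀ i, 0 < x i) ∧ ∑ i, x i = 1}

/-- The all-ones vector `𝟙`. -/
def ones (n : ℕ) : Fin n → ℝ := fun _ => 1

/-- The orthogonal projection matrix `P_H = I - (1/n) 𝟙 𝟙ᵀ` onto `H = {z : ∑ i, z i = 0}`. -/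
def PH (n : ℕ) : Matrix (Fin n) (Fin n) ℝ :=
  1 - (n : ℝ)⁻¹ • Matrix.of fun _ _ => (1 : ℝ)

/-- The gradient (vector of partial derivatives) of `h`. -/
def grad {n : ℕ} (h : (Fin n → ℝ) → ℝ) (x : Fin n → ℝ) : Fin n → ℝ :=
  fun i => fderiv ℝ h x (Pi.single i 1)

/-- The Hessian matrix of `h`. -/
def hess {n : ℕ} (h : (Fin n → ℝ) → ℝ) (x : Fin n → ℝ) : Matrix (Fin n) (Fin n) ℝ :=
  Matrix.of fun i j =>
    fderiv ℝ (fun y => fderiv ℝ h y (Pi.single j 1)) x (Pi.single i 1)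

lemma clm_apply_eq_dot {n : ℕ} (L : (Fin n → ℝ) →L[ℝ] ℝ) (d : Fin n → ℝ) :
    L d = ∑ i, d i * L (Pi.single i 1) := by
  have hd : d = ∑ i, d i • (Pi.single i 1 : Fin n → ℝ) := by
    ext j
    simp [Finset.sum_apply, Pi.single_apply]
  calc L d = L (∑ i, d i • (Pi.single i 1 : Fin n → ℝ)) := by rw [← hd]
    _ = ∑ i, d i * L (Pi.single i 1) := by rw [map_sum]; simp

lemma simplex_convex {n : ℕ} : Convex ℝ (simplex n) := by
  intro x hx y hy a b ha hb hab
  refine ⟨fun i => ?_, ?_⟩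
  · have := hx.1 i; have := hy.1 i
    simp only [Pi.add_apply, Pi.smul_apply, smul_eq_mul]
    nlinarith
  · simp only [Pi.add_apply, Pi.smul_apply, smul_eq_mul, Finset.sum_add_distrib,
      ← Finset.mul_sum, hx.2, hy.2]
    linarith

lemma simplexInt_subset {n : ℕ} : simplexInt n ⊆ simplex n :=
  fun x hx => ⟨fun i => (hx.1 i).le, hx.2⟩

lemma seg_int {n : ℕ} {x₀ x : Fin n → ℝ} (hx₀ : x₀ ∈ simplexInt n) (hx : x ∈ simplex n)
    {t : ℝ} (ht0 : 0 ≤ t) (ht1 : t < 1) : t • (x - x₀) + x₀ ∈ simplexInt n := by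
  refine ⟨fun i => ?_, ?_⟩
  · have h1 := hx₀.1 i; have h2 := hx.1 i
    simp only [Pi.add_apply, Pi.smul_apply, Pi.sub_apply, smul_eq_mul]
    nlinarith
  · simp only [Pi.add_apply, Pi.smul_apply, Pi.sub_apply, smul_eq_mul, mul_sub,
      Finset.sum_add_distrib, Finset.sum_sub_distrib, ← Finset.mul_sum, hx.2, hx₀.2]
    ring

lemma dot_PH {n : ℕ} {d : Fin n → ℝ} (hd : ∑ i, d i = 0) (g : Fin n → ℝ) :
    d ⬝ᵥ (PH n *ᵥ g) = d ⬝ᵥ g := by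
  have hPH : ∀ i, (PH n *ᵥ g) i = g i - (n : ℝ)⁻¹ * ∑ j, g j := by
    intro i
    rw [PH, Matrix.sub_mulVec, Matrix.one_mulVec, Matrix.smul_mulVec]
    simp [Matrix.mulVec, dotProduct]
  simp only [dotProduct]
  calc ∑ i, d i * (PH n *ᵥ g) i = ∑ i, (d i * g i - d i * ((n : ℝ)⁻¹ * ∑ j, g j)) := by
        refine Finset.sum_congr rfl fun i _ => ?_
        rw [hPH i]; ring
    _ = ∑ i, d i * g i - (∑ i, d i) * ((n : ℝ)⁻¹ * ∑ j, g j) := by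
        rw [Finset.sum_sub_distrib, Finset.sum_mul]
    _ = ∑ i, d i * g i := by rw [hd]; ring

lemma grad_ineq {n : ℕ} {h : (Fin n → ℝ) → ℝ} (hconv : ConvexOn ℝ (simplex n) h)
    {x₀ x : Fin n → ℝ} (hdiff : DifferentiableAt ℝ h x₀)
    (hx₀ : x₀ ∈ simplex n) (hx : x ∈ simplex n) :
    fderiv ℝ h x₀ (x - x₀) ≤ h x - h x₀ := by
  set A : ℝ →ᵃ[ℝ] (Fin n → ℝ) := AffineMap.lineMap x₀ x with hA
  have hAt : ∀ t : ℝ, A t = t • (x - x₀) + x₀ := by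
    intro t; simp only [hA, AffineMap.lineMap_apply_module']
  have hsub : Set.Icc (0:ℝ) 1 ⊆ A ⁻¹' simplex n := by
    intro t ht
    have : A t = (1 - t) • x₀ + t • x := by
      rw [hAt]; module
    simp only [Set.mem_preimage, this]
    exact simplex_convex hx₀ hx (by linarith [ht.2]) ht.1 (by ring)
  have hψ : ConvexOn ℝ (Set.Icc (0:ℝ) 1) (h ∘ A) :=
    (hconv.comp_affineMap A).subset hsub (convex_Icc 0 1)
  have hcA : HasDerivAt (fun t : ℝ => A t) (x - x₀) 0 := by
    have : HasDerivAt (fun t : ℝ => t • (x - x₀) + x₀) ((1:ℝ) • (x - x₀)) 0 :=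
      ((hasDerivAt_id (0:ℝ)).smul_const (x - x₀)).add_const x₀
    rw [one_smul] at this
    exact this.congr_deriv rfl |>.congr_of_eventuallyEq (by
      filter_upwards with t; rw [hAt])
  have hA0 : A 0 = x₀ := by rw [hAt]; simp
  have hder : HasDerivAt (h ∘ A) (fderiv ℝ h x₀ (x - x₀)) 0 := by
    have h2 : HasFDerivAt h (fderiv ℝ h x₀) (A 0) := by rw [hA0]; exact hdiff.hasFDerivAt
    exact h2.comp_hasDerivAt 0 hcA
  have key := hψ.le_slope_of_hasDerivAt ⟨le_refl 0, zero_le_one⟩ ⟨zero_le_one, le_refl 1⟩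
    zero_lt_one hder
  have hA1 : A 1 = x := by rw [hAt]; module
  rw [slope_def_field] at key
  simpa [hA0, hA1] using key

lemma maximize {n : ℕ} {h : (Fin n → ℝ) → ℝ} (hconv : ConvexOn ℝ (simplex n) h)
    {x₀ x : Fin n → ℝ} (hdiff : DifferentiableAt ℝ h x₀)
    (hx₀ : x₀ ∈ simplexInt n) (hx : x ∈ simplex n) :
    x ⬝ᵥ (PH n *ᵥ grad h x₀) - h x ≤ x₀ ⬝ᵥ (PH n *ᵥ grad h x₀) - h x₀ := by
  set z := PH n *ᵥ grad h x₀ with hz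
  have hsum : ∑ i, (x - x₀) i = 0 := by
    simp only [Pi.sub_apply, Finset.sum_sub_distrib, hx.2, hx₀.2, sub_self]
  have h1 : fderiv ℝ h x₀ (x - x₀) ≤ h x - h x₀ :=
    grad_ineq hconv hdiff (simplexInt_subset hx₀) hx
  have h2 : fderiv ℝ h x₀ (x - x₀) = (x - x₀) ⬝ᵥ grad h x₀ := by
    rw [clm_apply_eq_dot]; rfl
  have h3 : (x - x₀) ⬝ᵥ z = (x - x₀) ⬝ᵥ grad h x₀ := dot_PH hsum _
  have h4 : (x - x₀) ⬝ᵥ z = x ⬝ᵥ z - x₀ ⬝ᵥ z := sub_dotProduct x x₀ z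
  linarith [h1, h2 ▸ h1]

lemma fderiv2_eq_hess {n : ℕ} {h : (Fin n → ℝ) → ℝ} {U : Set (Fin n → ℝ)} (hU : IsOpen U)
    (hC2 : ContDiffOn ℝ 2 h U) {y : Fin n → ℝ} (hy : y ∈ U) (d : Fin n → ℝ) :
    (fderiv ℝ (fderiv ℝ h) y d) d = d ⬝ᵥ (hess h y *ᵥ d) := by
  have hKd : DifferentiableAt ℝ (fderiv ℝ h) y :=
    ((hC2.contDiffAt (hU.mem_nhds hy)).fderiv_right (m := 1) (by norm_num)).differentiableAt (by norm_num)
  set L := fderiv ℝ (fderiv ℝ h) y with hL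
  have hessEq : ∀ i j, hess h y i j = (L (Pi.single i 1)) (Pi.single j 1) := by
    intro i j
    have hfd := fderiv_clm_apply (c := fderiv ℝ h) (u := fun _ => (Pi.single j 1 : Fin n → ℝ))
      hKd (differentiableAt_const _)
    simp only [fderiv_fun_const, Pi.zero_apply, ContinuousLinearMap.comp_zero, zero_add] at hfd
    show fderiv ℝ (fun w => fderiv ℝ h w (Pi.single j 1)) y (Pi.single i 1) = _
    rw [hfd]
    simp [ContinuousLinearMap.flip_apply, hL]
  calc (L d) d = (L.flip d) d := by simp [ContinuousLinearMap.flip_apply]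
    _ = ∑ i, d i * (L (Pi.single i 1)) d := by
        rw [clm_apply_eq_dot]
        simp [ContinuousLinearMap.flip_apply]
    _ = ∑ i, d i * ∑ j, (L (Pi.single i 1)) (Pi.single j 1) * d j := by
        refine Finset.sum_congr rfl fun i _ => ?_
        rw [clm_apply_eq_dot (L (Pi.single i 1)) d]
        congr 1
        exact Finset.sum_congr rfl fun j _ => mul_comm _ _
    _ = d ⬝ᵥ (hess h y *ᵥ d) := by
        simp only [dotProduct, Matrix.mulVec]
        exact Finset.sum_congr rfl fun i _ => by
          congr 1
          exact Finset.sum_congr rfl fun j _ => by rw [hessEq i j]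

lemma deriv2_line {n : ℕ} {h : (Fin n → ℝ) → ℝ} {U : Set (Fin n → ℝ)} (hU : IsOpen U)
    (hC2 : ContDiffOn ℝ 2 h U) (x₀ d : Fin n → ℝ) {t : ℝ}
    (hct : t • d + x₀ ∈ U) :
    deriv (deriv (fun s : ℝ => h (s • d + x₀))) t = d ⬝ᵥ (hess h (t • d + x₀) *ᵥ d) := by
  set c : ℝ → (Fin n → ℝ) := fun s => s • d + x₀ with hc
  have hccont : Continuous c := by fun_prop
  have hcU : IsOpen (c ⁻¹' U) := hU.preimage hccont
  have hcder : ∀ s : ℝ, HasDerivAt c d s := fun s => by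
    simpa [hc] using ((hasDerivAt_id s).smul_const d).add_const x₀
  have hg' : ∀ s ∈ c ⁻¹' U, HasDerivAt (fun u => h (c u)) (fderiv ℝ h (c s) d) s := by
    intro s hs
    have hdiffAt : DifferentiableAt ℝ h (c s) :=
      (hC2.differentiableOn (by norm_num)).differentiableAt (hU.mem_nhds hs)
    exact hdiffAt.hasFDerivAt.comp_hasDerivAt s (hcder s)
  have heq : deriv (fun u => h (c u)) =ᶠ[nhds t] fun s => fderiv ℝ h (c s) d :=
    Filter.eventually_of_mem (hcU.mem_nhds hct) (fun s hs => (hg' s hs).deriv)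
  have hKd : DifferentiableAt ℝ (fderiv ℝ h) (c t) :=
    ((hC2.contDiffAt (hU.mem_nhds hct)).fderiv_right (m := 1) (by norm_num)).differentiableAt (by norm_num)
  have hKc : HasDerivAt (fun s => fderiv ℝ h (c s)) (fderiv ℝ (fderiv ℝ h) (c t) d) t :=
    hKd.hasFDerivAt.comp_hasDerivAt t (hcder t)
  have happ : HasDerivAt (fun s => fderiv ℝ h (c s) d)
      ((fderiv ℝ (fderiv ℝ h) (c t) d) d) t := by
    have := hKc.clm_apply (hasDerivAt_const t d)
    simpa using this
  rw [heq.deriv_eq, happ.deriv, fderiv2_eq_hess hU hC2 hct d]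

lemma unique_max {n : ℕ} {h : (Fin n → ℝ) → ℝ} (hconv : ConvexOn ℝ (simplex n) h)
    {U : Set (Fin n → ℝ)} (hU : IsOpen U) (hUsub : simplexInt n ⊆ U)
    (hC2 : ContDiffOn ℝ 2 h U)
    (hpos : ∀ y ∈ simplexInt n, ∀ v : Fin n → ℝ, v ≠ 0 → 0 < v ⬝ᵥ (hess h y *ᵥ v))
    {x₀ x z : Fin n → ℝ} (hx₀ : x₀ ∈ simplexInt n) (hx : x ∈ simplex n)
    (hmax₀ : ∀ y ∈ simplex n, y ⬝ᵥ z - h y ≤ x₀ ⬝ᵥ z - h x₀)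
    (hmaxx : ∀ y ∈ simplex n, y ⬝ᵥ z - h y ≤ x ⬝ᵥ z - h x) :
    x = x₀ := by
  by_contra hne
  set d : Fin n → ℝ := x - x₀ with hdd
  have hd0 : d ≠ 0 := sub_ne_zero.mpr hne
  set c : ℝ → (Fin n → ℝ) := fun s => s • d + x₀ with hc
  have hccont : Continuous c := by fun_prop
  have hcmem : ∀ s : ℝ, 0 ≤ s → s < 1 → c s ∈ simplexInt n := fun s h0 h1 =>
    seg_int hx₀ hx h0 h1
  have hc0 : c 0 = x₀ := by simp [hc]
  -- strict convexity of g on [0, 3/4]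
  set g : ℝ → ℝ := fun s => h (c s) with hg
  have hcontg : ContinuousOn g (Set.Icc 0 (3/4 : ℝ)) := by
    refine (hC2.continuousOn).comp hccont.continuousOn fun s hs => ?_
    exact hUsub (hcmem s hs.1 (lt_of_le_of_lt hs.2 (by norm_num)))
  have hstrict : StrictConvexOn ℝ (Set.Icc 0 (3/4 : ℝ)) g := by
    refine strictConvexOn_of_deriv2_pos (convex_Icc _ _) hcontg fun s hs => ?_
    rw [interior_Icc] at hs
    have hmem : c s ∈ simplexInt n := hcmem s hs.1.le (lt_of_lt_of_le hs.2 (by norm_num))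
    have h2 : deriv^[2] g s = deriv (deriv g) s := rfl
    rw [h2, show deriv (deriv g) s = d ⬝ᵥ (hess h (c s) *ᵥ d) from
      deriv2_line hU hC2 x₀ d (hUsub hmem)]
    exact hpos _ hmem d hd0
  have key := hstrict.2 (Set.mem_Icc.mpr ⟨le_refl 0, by norm_num⟩)
    (Set.mem_Icc.mpr ⟨by norm_num, le_refl _⟩) (by norm_num : (0:ℝ) ≠ 3/4)
    (by norm_num : (0:ℝ) < 1/2) (by norm_num : (0:ℝ) < 1/2) (by norm_num)
  have keyg : g (3/8 : ℝ) < (1/2) * g 0 + (1/2) * g (3/4 : ℝ) := by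
    have : (1/2 : ℝ) • (0:ℝ) + (1/2 : ℝ) • (3/4 : ℝ) = 3/8 := by norm_num
    rw [this] at key
    simpa [smul_eq_mul] using key
  -- linear facts
  have hlin : ∀ s : ℝ, c s ⬝ᵥ z = x₀ ⬝ᵥ z + s * (d ⬝ᵥ z) := by
    intro s
    simp [hc, add_dotProduct, smul_dotProduct, smul_eq_mul]
    ring
  have hdz : d ⬝ᵥ z = x ⬝ᵥ z - x₀ ⬝ᵥ z := sub_dotProduct x x₀ z
  have hx₀s : x₀ ∈ simplex n := simplexInt_subset hx₀
  have hfx : x ⬝ᵥ z - h x = x₀ ⬝ᵥ z - h x₀ :=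
    le_antisymm (hmax₀ x hx) (hmaxx x₀ hx₀s)
  have hcomb : (1/4 : ℝ) • x₀ + (3/4 : ℝ) • x = c (3/4 : ℝ) := by
    simp only [hc, hdd]; module
  have hconv34 : h (c (3/4 : ℝ)) ≤ (1/4) * h x₀ + (3/4) * h x := by
    have := hconv.2 hx₀s hx (by norm_num : (0:ℝ) ≤ 1/4) (by norm_num : (0:ℝ) ≤ 3/4)
      (by norm_num)
    rw [hcomb] at this
    simpa [smul_eq_mul] using this
  have h38mem : c (3/8 : ℝ) ∈ simplex n :=
    simplexInt_subset (hcmem _ (by norm_num) (by norm_num))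
  have hfc38 : c (3/8 : ℝ) ⬝ᵥ z - h (c (3/8 : ℝ)) ≤ x₀ ⬝ᵥ z - h x₀ := hmax₀ _ h38mem
  have e38 := hlin (3/8 : ℝ)
  have e34 := hlin (3/4 : ℝ)
  have hg0 : g 0 = h x₀ := by rw [hg]; simp [hc0]
  rw [hg0] at keyg
  have hg38 : g (3/8 : ℝ) = h (c (3/8 : ℝ)) := rfl
  have hg34 : g (3/4 : ℝ) = h (c (3/4 : ℝ)) := rfl
  rw [hg38, hg34] at keyg
  linarith

/-- (Lemma 2 of the paper, inverse characterization.) Under the stated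
hypotheses on `h`, (i) `x ↦ P_H ∇h(x)` is a bijection from `Δ_n°` onto
`M = {P_H ∇h(x) : x ∈ Δ_n°}`; and (ii) for every `z ∈ M` the function `x ↦ ⟨x, z⟩ - h x`
has a unique maximizer over `Δ_n`, this maximizer lies in `Δ_n°` and is exactly the unique
`x ∈ Δ_n°` with `P_H ∇h(x) = z`. -/
theorem stmt4 {n : ℕ} (hn : 2 ≤ n) (h : (Fin n → ℝ) → ℝ)
    (hcont : ContinuousOn h (simplex n)) (hconv : ConvexOn ℝ (simplex n) h)
    (U : Set (Fin n → ℝ)) (hU : IsOpen U) (hUsub : simplexInt n ⊆ U)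
    (hC2 : ContDiffOn ℝ 2 h U)
    (hpos : ∀ x ∈ simplexInt n, ∀ v : Fin n → ℝ, v ≠ 0 → 0 < v ⬝ᵥ (hess h x *ᵥ v)) :
    Set.BijOn (fun x => PH n *ᵥ grad h x) (simplexInt n)
      ((fun x => PH n *ᵥ grad h x) '' simplexInt n) ∧
    ∀ z ∈ (fun x => PH n *ᵥ grad h x) '' simplexInt n,
      ∃ x₀ ∈ simplexInt n, PH n *ᵥ grad h x₀ = z ∧
        (∀ x ∈ simplex n, x ⬝ᵥ z - h x ≤ x₀ ⬝ᵥ z - h x₀) ∧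
        (∀ x ∈ simplex n, (∀ x' ∈ simplex n, x' ⬝ᵥ z - h x' ≤ x ⬝ᵥ z - h x) → x = x₀) := by
  have hdiffAt : ∀ x₀ ∈ simplexInt n, DifferentiableAt ℝ h x₀ := fun x₀ hx₀ =>
    (hC2.differentiableOn (by norm_num)).differentiableAt (hU.mem_nhds (hUsub hx₀))
  constructor
  · refine Set.InjOn.bijOn_image ?_
    intro a ha b hb hab
    simp only at hab
    refine unique_max (z := PH n *ᵥ grad h b) hconv hU hUsub hC2 hpos hb (simplexInt_subset ha) ?_ ?_
    · exact fun y hy => maximize hconv (hdiffAt b hb) hb hy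
    · exact fun y hy => hab ▸ maximize hconv (hdiffAt a ha) ha hy
  · rintro z ⟨x₀, hx₀, hzx⟩
    simp only at hzx
    refine ⟨x₀, hx₀, hzx, ?_, ?_⟩
    · intro x hx
      rw [← hzx]
      exact maximize hconv (hdiffAt x₀ hx₀) hx₀ hx
    · intro x hx hxmax
      refine unique_max hconv hU hUsub hC2 hpos hx₀ hx ?_ hxmax
      exact fun y hy => hzx ▸ maximize hconv (hdiffAt x₀ hx₀) hx₀ hy
end
end

section
/- Let A ∈ ℝ^{n×m} and suppose there is no fully mixed neutralizing strategy, i.e., there is no u₀ in the relative interior Δ_m° of the simplex Δ_m with A u₀ ∈ span{𝟙}. Then there exists a nonzero vector w ∈ H such that ⟨w, P_H A u⟩ ≥ 0 for all u ∈ Δ_m. -/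
open Matrix MeasureTheory

noncomputable section

lemma PH_apply {n : ℕ} (y : Fin n → ℝ) (i : Fin n) :
    (PH n *ᵥ y) i = y i - (n : ℝ)⁻¹ * ∑ k, y k := by
  simp only [PH, mulVec, dotProduct, Matrix.sub_apply, Matrix.smul_apply, Matrix.of_apply,
    smul_eq_mul, mul_one, sub_mul, Finset.sum_sub_distrib, Matrix.one_apply]
  simp [ite_mul, Finset.mul_sum]

lemma PH_sum {n : ℕ} (hn : n ≠ 0) (y : Fin n → ℝ) : ∑ i, (PH n *ᵥ y) i = 0 := by
  have h : ∀ i, (PH n *ᵥ y) i = y i - (n : ℝ)⁻¹ * ∑ k, y k := PH_apply y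
  have hn' : (n : ℝ) ≠ 0 := Nat.cast_ne_zero.2 hn
  simp only [h, Finset.sum_sub_distrib, Finset.sum_const, Finset.card_univ, Fintype.card_fin,
    nsmul_eq_mul]
  field_simp
  ring

lemma PH_eq_zero {n : ℕ} (y : Fin n → ℝ) (h : PH n *ᵥ y = 0) :
    y = ((n : ℝ)⁻¹ * ∑ k, y k) • (fun _ => (1:ℝ)) := by
  funext i
  have h2 := congrFun h i
  rw [PH_apply] at h2
  have h3 : y i = (n : ℝ)⁻¹ * ∑ k, y k := by
    have h0 : (0 : ℝ) = y i - (n : ℝ)⁻¹ * ∑ k, y k := by simpa using h2.symm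
    linarith
  simpa using h3

lemma simplex_isCompact (m : ℕ) : IsCompact (simplex m) := by
  apply Metric.isCompact_of_isClosed_isBounded
  · have h1 : IsClosed {x : Fin m → ℝ | ∀ i, 0 ≤ x i} := by
      have : {x : Fin m → ℝ | ∀ i, 0 ≤ x i} = ⋂ i, {x | 0 ≤ x i} := by ext; simp
      rw [this]
      exact isClosed_iInter fun i => isClosed_le continuous_const (continuous_apply i)
    have h2 : IsClosed {x : Fin m → ℝ | ∑ i, x i = 1} :=
      isClosed_eq (continuous_finset_sum _ fun i _ => continuous_apply i) continuous_const
    exact (h1.inter h2 : IsClosed (simplex m))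
  · rw [Metric.isBounded_iff_subset_closedBall 0]
    refine ⟨1, fun x hx => ?_⟩
    obtain ⟨h0, h1⟩ := hx
    rw [Metric.mem_closedBall, dist_zero_right]
    rw [pi_norm_le_iff_of_nonneg (by norm_num)]
    intro i
    rw [Real.norm_eq_abs, abs_of_nonneg (h0 i)]
    calc x i ≤ ∑ j, x j := Finset.single_le_sum (fun j _ => h0 j) (Finset.mem_univ i)
    _ = 1 := h1

/-- (Separation step in the necessity proof of Theorem 1 of the paper.)
If there is no fully mixed neutralizing strategy, i.e. no `u₀ ∈ Δ_m°` with
`A u₀ = k 𝟙`, then there is a nonzero `w ∈ H` with `⟨w, P_H A u⟩ ≥ 0` for all `u ∈ Δ_m`. -/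
theorem stmt8 {n m : ℕ} (hn : 2 ≤ n) (A : Matrix (Fin n) (Fin m) ℝ)
    (hno : ¬ ∃ u₀ ∈ simplexInt m, ∃ k : ℝ, A *ᵥ u₀ = k • ones n) :
    ∃ w : Fin n → ℝ, w ≠ 0 ∧ (∑ i, w i) = 0 ∧
      ∀ u ∈ simplex m, 0 ≤ w ⬝ᵥ (PH n *ᵥ (A *ᵥ u)) := by
  classical
  rcases Nat.eq_zero_or_pos m with hm | hm
  · -- m = 0 : simplex is empty
    subst hm
    have h01 : (⟨0, by omega⟩ : Fin n) ≠ ⟨1, by omega⟩ := Fin.ne_of_val_ne (by norm_num)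
    refine ⟨Pi.single (⟨0, by omega⟩ : Fin n) 1 - Pi.single ⟨1, by omega⟩ 1, ?_, ?_, ?_⟩
    · intro h
      have h2 := congrFun h ⟨0, by omega⟩
      rw [Pi.sub_apply, Pi.single_eq_same, Pi.single_eq_of_ne h01, Pi.zero_apply] at h2
      norm_num at h2
    · simp [Pi.sub_apply, Finset.sum_sub_distrib, Pi.single_apply]
    · intro u hu
      exact absurd hu.2 (by simp)
  · -- main case m ≥ 1
    have hn0 : n ≠ 0 := by omega
    have hm0 : (m : ℝ) ≠ 0 := Nat.cast_ne_zero.2 (by omega)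
    set B := PH n * A with hBdef
    have hBv : ∀ x : Fin m → ℝ, PH n *ᵥ (A *ᵥ x) = B *ᵥ x := fun x => mulVec_mulVec x (PH n) A
    have hsum0 : ∀ x, ∑ i, (B *ᵥ x) i = 0 := fun x => by rw [← hBv]; exact PH_sum hn0 _
    set ub : Fin m → ℝ := fun _ => (m : ℝ)⁻¹ with hub
    have hubs : ub ∈ simplex m := by
      refine ⟨fun j => by positivity, ?_⟩
      simp only [hub, Finset.sum_const, Finset.card_univ, Fintype.card_fin, nsmul_eq_mul]
      field_simp
    set cs := B *ᵥ ub with hcs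
    set C := (fun v : Fin m → ℝ => B *ᵥ v) '' simplex m with hC
    have hcsC : cs ∈ C := ⟨ub, hubs, rfl⟩
    have hCsum : ∀ a ∈ C, ∑ i, a i = 0 := by rintro a ⟨v, hv, rfl⟩; exact hsum0 v
    -- the ray -s • cs avoids C
    have hray : ∀ s : ℝ, 0 < s → (-s) • cs ∉ C := by
      rintro s hs ⟨v, hv, hveq⟩
      apply hno
      have hs1 : (0:ℝ) < 1 + s := by linarith
      set u := (1+s)⁻¹ • (v + s • ub) with hu
      have hBu : B *ᵥ u = 0 := by
        have hveq' : B *ᵥ v = -s • cs := hveq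
        rw [hu, mulVec_smul, mulVec_add, mulVec_smul, hveq', ← hcs]
        simp
      refine ⟨u, ⟨fun j => ?_, ?_⟩, ?_⟩
      · have h1 : 0 < v j + s * (m:ℝ)⁻¹ := by
          have := hv.1 j
          have : (0:ℝ) < s * (m:ℝ)⁻¹ := by positivity
          have := hv.1 j
          linarith
        have : u j = (1+s)⁻¹ * (v j + s * (m:ℝ)⁻¹) := by simp [hu, hub, mul_add]
        rw [this]
        positivity
      · have : ∀ j, u j = (1+s)⁻¹ * (v j + s * (m:ℝ)⁻¹) := fun j => by simp [hu, hub, mul_add]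
        simp only [this, ← Finset.mul_sum, Finset.sum_add_distrib, hv.2, Finset.sum_const,
          Finset.card_univ, Fintype.card_fin, nsmul_eq_mul]
        field_simp
      · refine ⟨(n : ℝ)⁻¹ * ∑ k, (A *ᵥ u) k, ?_⟩
        have := PH_eq_zero (A *ᵥ u) (by rw [hBv]; exact hBu)
        exact this
    -- convexity, closedness of C
    have hCcvx : Convex ℝ C := by
      rintro a ⟨v1, hv1, rfl⟩ b ⟨v2, hv2, rfl⟩ p q hp hq hpq
      refine ⟨p • v1 + q • v2, ⟨fun j => ?_, ?_⟩, ?_⟩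
      · simp only [Pi.add_apply, Pi.smul_apply, smul_eq_mul]
        exact add_nonneg (mul_nonneg hp (hv1.1 j)) (mul_nonneg hq (hv2.1 j))
      · simp only [Pi.add_apply, Pi.smul_apply, smul_eq_mul]
        rw [Finset.sum_add_distrib, ← Finset.mul_sum, ← Finset.mul_sum, hv1.2, hv2.2]
        simpa using hpq
      · show B *ᵥ (p • v1 + q • v2) = p • (B *ᵥ v1) + q • (B *ᵥ v2)
        rw [mulVec_add, mulVec_smul, mulVec_smul]
    have hcont : Continuous fun v : Fin m → ℝ => B *ᵥ v := by
      apply continuous_pi; intro i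
      simp only [mulVec, dotProduct]
      exact continuous_finset_sum _ fun j _ => continuous_const.mul (continuous_apply j)
    have hCcl : IsClosed C := ((simplex_isCompact m).image hcont).isClosed
    set M := Real.sqrt (cs ⬝ᵥ cs) with hM
    -- separating unit vectors
    have key : ∀ k : ℕ, ∃ z : Fin n → ℝ, z ⬝ᵥ z = 1 ∧ (∑ i, z i) = 0 ∧
        ∀ a ∈ C, -(((k:ℝ)+1)⁻¹ * M) ≤ z ⬝ᵥ a := by
      intro k
      set s : ℝ := ((k:ℝ)+1)⁻¹ with hs
      have hspos : 0 < s := by positivity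
      obtain ⟨f, t, hfa, hft⟩ := geometric_hahn_banach_closed_point hCcvx hCcl (hray s hspos)
      set y : Fin n → ℝ := fun i => f (Pi.single i 1) with hy
      have hrep : ∀ v : Fin n → ℝ, f v = ∑ i, v i * y i := by
        intro v
        have hv : v = ∑ i, v i • (Pi.single i 1 : Fin n → ℝ) := by
          funext j
          simp [Pi.single_apply]
        conv_lhs => rw [hv]
        rw [map_sum]
        simp [hy]
      set g : Fin n → ℝ := fun i => -(y i) with hg
      have hgf : ∀ v, g ⬝ᵥ v = -(f v) := by
        intro v
        have h1 : ∀ i, g i * v i = -(v i * y i) := fun i => by simp [hg]; ring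
        simp [dotProduct, h1, hrep v]
      have hgdot : ∀ a ∈ C, g ⬝ᵥ ((-s) • cs) < g ⬝ᵥ a := by
        intro a ha
        rw [hgf, hgf]
        have := (hfa a ha).trans hft
        linarith
      set d : Fin n → ℝ := fun i => g i - (∑ j, g j) / n with hd
      have hdv : ∀ v : Fin n → ℝ, ∑ i, v i = 0 → d ⬝ᵥ v = g ⬝ᵥ v := by
        intro v hv0
        simp only [dotProduct, hd, sub_mul, Finset.sum_sub_distrib, ← Finset.mul_sum, hv0,
          mul_zero, sub_zero]
      have hxsum : ∑ i, ((-s) • cs) i = 0 := by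
        simp only [Pi.smul_apply, smul_eq_mul, ← Finset.mul_sum, hCsum cs hcsC, mul_zero]
      have hddot : ∀ a ∈ C, d ⬝ᵥ ((-s) • cs) < d ⬝ᵥ a := by
        intro a ha
        rw [hdv _ hxsum, hdv _ (hCsum a ha)]
        exact hgdot a ha
      have hdne : d ≠ 0 := by
        intro h0
        have := hddot cs hcsC
        rw [h0] at this
        simp at this
      have hq : 0 < d ⬝ᵥ d := by
        obtain ⟨i, hi⟩ := Function.ne_iff.1 hdne
        exact Finset.sum_pos' (fun j _ => mul_self_nonneg _)
          ⟨i, Finset.mem_univ i, mul_self_pos.2 hi⟩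
      set r : ℝ := (Real.sqrt (d ⬝ᵥ d))⁻¹ with hr
      have hrpos : 0 < r := by
        rw [hr]
        exact inv_pos.2 (Real.sqrt_pos.2 hq)
      set z : Fin n → ℝ := r • d with hz
      have hzz : z ⬝ᵥ z = 1 := by
        rw [hz, smul_dotProduct, dotProduct_smul, smul_eq_mul, smul_eq_mul, ← mul_assoc, hr,
          ← mul_inv, Real.mul_self_sqrt hq.le]
        exact inv_mul_cancel₀ hq.ne'
      have hdsum : ∑ i, d i = 0 := by
        simp only [hd, Finset.sum_sub_distrib, Finset.sum_const, Finset.card_univ,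
          Fintype.card_fin, nsmul_eq_mul]
        have hn' : (n : ℝ) ≠ 0 := Nat.cast_ne_zero.2 hn0
        field_simp
        ring
      have hzsum : ∑ i, z i = 0 := by
        simp only [hz, Pi.smul_apply, smul_eq_mul, ← Finset.mul_sum, hdsum, mul_zero]
      refine ⟨z, hzz, hzsum, ?_⟩
      intro a ha
      have h1 : z ⬝ᵥ ((-s) • cs) < z ⬝ᵥ a := by
        rw [hz, smul_dotProduct, smul_dotProduct, smul_eq_mul, smul_eq_mul]
        exact mul_lt_mul_of_pos_left (hddot a ha) hrpos
      have h2 : z ⬝ᵥ ((-s) • cs) = -s * (z ⬝ᵥ cs) := by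
        rw [dotProduct_smul]; simp
      have hcsM : z ⬝ᵥ cs ≤ M := by
        have hCS := Finset.sum_mul_sq_le_sq_mul_sq Finset.univ z cs
        have e1 : ∑ i, z i ^ 2 = 1 := by rw [← hzz]; simp [dotProduct, sq]
        have e2 : ∑ i, cs i ^ 2 = cs ⬝ᵥ cs := by simp [dotProduct, sq]
        have e3 : ∑ i, z i * cs i = z ⬝ᵥ cs := rfl
        rw [e1, e2, e3, one_mul] at hCS
        calc z ⬝ᵥ cs ≤ |z ⬝ᵥ cs| := le_abs_self _
        _ = Real.sqrt ((z ⬝ᵥ cs) ^ 2) := (Real.sqrt_sq_eq_abs _).symm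
        _ ≤ Real.sqrt (cs ⬝ᵥ cs) := Real.sqrt_le_sqrt hCS
        _ = M := rfl
      have h3 : s * (z ⬝ᵥ cs) ≤ s * M := mul_le_mul_of_nonneg_left hcsM hspos.le
      rw [h2] at h1
      rw [hs] at h3 ⊢
      linarith
    choose z hz1 hz2 hz3 using key
    -- compactness of the sphere within H
    have hcdot : Continuous fun v : Fin n → ℝ => v ⬝ᵥ v := by
      simp only [dotProduct]
      exact continuous_finset_sum _ fun i _ => (continuous_apply i).mul (continuous_apply i)
    have hScpt : IsCompact {v : Fin n → ℝ | v ⬝ᵥ v = 1 ∧ ∑ i, v i = 0} := by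
      apply Metric.isCompact_of_isClosed_isBounded
      · exact (isClosed_eq hcdot continuous_const).inter
          (isClosed_eq (continuous_finset_sum _ fun i _ => continuous_apply i) continuous_const)
      · rw [Metric.isBounded_iff_subset_closedBall 0]
        refine ⟨1, fun x hx => ?_⟩
        rw [Metric.mem_closedBall, dist_zero_right, pi_norm_le_iff_of_nonneg (by norm_num)]
        intro i
        have h1 : x i * x i ≤ 1 := by
          have hx1 : ∑ j, x j * x j = 1 := hx.1
          rw [← hx1]
          exact Finset.single_le_sum (f := fun j => x j * x j)
            (fun j _ => mul_self_nonneg _) (Finset.mem_univ i)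
        rw [Real.norm_eq_abs]
        nlinarith [abs_nonneg (x i), abs_mul_abs_self (x i)]
    obtain ⟨w, hwS, φ, hφmono, hφlim⟩ := hScpt.tendsto_subseq (fun k => ⟨hz1 k, hz2 k⟩)
    refine ⟨w, ?_, hwS.2, ?_⟩
    · intro h0
      have := hwS.1
      rw [h0] at this
      simp at this
    · intro u hu
      rw [hBv]
      have haC : B *ᵥ u ∈ C := ⟨u, hu, rfl⟩
      set a := B *ᵥ u with ha
      have hconta : Continuous fun v : Fin n → ℝ => v ⬝ᵥ a := by
        simp only [dotProduct]
        exact continuous_finset_sum _ fun i _ => (continuous_apply i).mul continuous_const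
      have h1 : Filter.Tendsto (fun k => z (φ k) ⬝ᵥ a) Filter.atTop (nhds (w ⬝ᵥ a)) :=
        (hconta.tendsto w).comp hφlim
      have t1 : Filter.Tendsto (fun k : ℕ => ((φ k : ℝ) + 1)) Filter.atTop Filter.atTop :=
        Filter.tendsto_atTop_add_const_right _ 1
          (tendsto_natCast_atTop_atTop.comp hφmono.tendsto_atTop)
      have t2 : Filter.Tendsto (fun k : ℕ => ((φ k : ℝ) + 1)⁻¹) Filter.atTop (nhds 0) :=
        t1.inv_tendsto_atTop
      have h2 : Filter.Tendsto (fun k : ℕ => -(((φ k : ℝ) + 1)⁻¹ * M)) Filter.atTop (nhds 0) := by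
        have := (t2.mul_const M).neg
        simpa using this
      exact le_of_tendsto_of_tendsto' h2 h1 fun k => hz3 (φ k) a haC
end
end
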